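/- Let X and Y be real Banach spaces, A : X → Y a linear isometry, σ > 0, and Φ : Y → X a map that is Lipschitz continuous with constant 1/σ. Let T > 0 and for i = 1, 2 let gᵢ : [0,T] → Y be Bochner integrable and let zᵢ : [0,T] → X be continuous with zᵢ(t) = ∫₀ᵗ Φ(gᵢ(s) + A(zᵢ(s))) ds for all t ∈ [0,T]. Then for every t ∈ [0,T]: ‖z₁(t) − z₂(t)‖ ≤ (1/σ)·e^{t/σ}·∫₀ᵗ‖g₁(s) − g₂(s)‖ ds, and for almost every t ∈ [0,T]: ‖Φ(g₁(t) + A(z₁(t))) − Φ(g₂(t) + A(z₂(t)))‖ ≤ (1/σ)‖g₁(t) − g₂(t)‖ + (1/σ²)·e^{t/σ}·∫₀ᵗ‖g₁(s) − g₂(s)‖ ds. -/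

import Mathlib

open MeasureTheory

theorem gronwall_lipschitz_estimate_abstract {X Y : Type*}
    [NormedAddCommGroup X] [NormedSpace ℝ X] [CompleteSpace X]
    [NormedAddCommGroup Y] [NormedSpace ℝ Y]
    (A : X →ₗᵢ[ℝ] Y) (σ : ℝ) (hσ : 0 < σ)
    (Φ : Y → X) (hΦ : LipschitzWith (Real.toNNReal (1 / σ)) Φ)
    (T : ℝ) (hT : 0 < T)
    (g₁ g₂ : ℝ → Y)
    (hg₁ : IntegrableOn g₁ (Set.Icc 0 T) volume)
    (hg₂ : IntegrableOn g₂ (Set.Icc 0 T) volume)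
    (z₁ z₂ : ℝ → X)
    (hz₁c : ContinuousOn z₁ (Set.Icc 0 T)) (hz₂c : ContinuousOn z₂ (Set.Icc 0 T))
    (hz₁ : ∀ t ∈ Set.Icc (0:ℝ) T, z₁ t = ∫ s in (0:ℝ)..t, Φ (g₁ s + A (z₁ s)))
    (hz₂ : ∀ t ∈ Set.Icc (0:ℝ) T, z₂ t = ∫ s in (0:ℝ)..t, Φ (g₂ s + A (z₂ s))) :
    (∀ t ∈ Set.Icc (0:ℝ) T,
      ‖z₁ t - z₂ t‖ ≤ (1 / σ) * Real.exp (t / σ) * ∫ s in (0:ℝ)..t, ‖g₁ s - g₂ s‖) ∧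
    (∀ᵐ t ∂(volume.restrict (Set.Icc 0 T)),
      ‖Φ (g₁ t + A (z₁ t)) - Φ (g₂ t + A (z₂ t))‖ ≤
        (1 / σ) * ‖g₁ t - g₂ t‖ +
          (1 / σ ^ 2) * Real.exp (t / σ) * ∫ s in (0:ℝ)..t, ‖g₁ s - g₂ s‖) := by
  have hσ' : (0:ℝ) < 1 / σ := by positivity
  have hLcoe : ((Real.toNNReal (1 / σ)) : ℝ) = 1 / σ := Real.coe_toNNReal _ hσ'.le
  set h : ℝ → ℝ := fun s => ‖g₁ s - g₂ s‖ with hh_def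
  set f : ℝ → ℝ := fun s => ‖z₁ s - z₂ s‖ with hf_def
  -- Lipschitz pointwise estimate
  have lip : ∀ u v : Y, ‖Φ u - Φ v‖ ≤ (1 / σ) * ‖u - v‖ := by
    intro u v
    have := hΦ.dist_le_mul u v
    rwa [dist_eq_norm, dist_eq_norm, hLcoe] at this
  have lipf : ∀ s : ℝ, ‖Φ (g₁ s + A (z₁ s)) - Φ (g₂ s + A (z₂ s))‖ ≤ (1 / σ) * (h s + f s) := by
    intro s
    refine (lip _ _).trans ?_
    have : (g₁ s + A (z₁ s)) - (g₂ s + A (z₂ s)) = (g₁ s - g₂ s) + A (z₁ s - z₂ s) := by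
      rw [map_sub]; abel
    rw [this]
    have : ‖(g₁ s - g₂ s) + A (z₁ s - z₂ s)‖ ≤ h s + f s := by
      refine (norm_add_le _ _).trans ?_
      rw [A.norm_map]
    exact by nlinarith [this]
  -- integrability facts
  have hh_int : IntegrableOn h (Set.Icc 0 T) volume := (hg₁.sub hg₂).norm
  have f_cont : ContinuousOn f (Set.Icc 0 T) := (hz₁c.sub hz₂c).norm
  have f_int : IntegrableOn f (Set.Icc 0 T) volume := f_cont.integrableOn_Icc
  have key : ∀ (g : ℝ → Y) (z : ℝ → X), IntegrableOn g (Set.Icc 0 T) volume →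
      ContinuousOn z (Set.Icc 0 T) →
      IntegrableOn (fun s => Φ (g s + A (z s))) (Set.Icc 0 T) volume := by
    intro g z hg hz
    have hu : IntegrableOn (fun s => g s + A (z s)) (Set.Icc 0 T) volume :=
      hg.add ((A.continuous.comp_continuousOn hz).integrableOn_Icc)
    have hmeas : AEStronglyMeasurable (fun s => Φ (g s + A (z s)))
        (volume.restrict (Set.Icc 0 T)) :=
      hΦ.continuous.comp_aestronglyMeasurable hu.aestronglyMeasurable
    have hc : IntegrableOn (fun _ : ℝ => ‖Φ 0‖) (Set.Icc 0 T) volume :=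
      integrableOn_const (by simp)
    have hbi : IntegrableOn (fun s => (1 / σ) * ‖g s + A (z s)‖ + ‖Φ 0‖)
        (Set.Icc 0 T) volume := (hu.norm.const_mul (1 / σ)).add hc
    refine Integrable.mono' hbi hmeas ?_
    refine Filter.Eventually.of_forall fun s => ?_
    calc ‖Φ (g s + A (z s))‖ = ‖(Φ (g s + A (z s)) - Φ 0) + Φ 0‖ := by rw [sub_add_cancel]
      _ ≤ ‖Φ (g s + A (z s)) - Φ 0‖ + ‖Φ 0‖ := norm_add_le _ _
      _ ≤ (1 / σ) * ‖g s + A (z s)‖ + ‖Φ 0‖ := by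
          have := lip (g s + A (z s)) 0
          rw [sub_zero] at this
          linarith
  have hΦu₁ := key g₁ z₁ hg₁ hz₁c
  have hΦu₂ := key g₂ z₂ hg₂ hz₂c
  -- interval integrability helpers
  have IIX : ∀ (w : ℝ → X),
      IntegrableOn w (Set.Icc 0 T) volume → ∀ t ∈ Set.Icc (0:ℝ) T,
      IntervalIntegrable w volume 0 t := by
    intro w hw t ht
    refine (hw.mono_set ?_).intervalIntegrable
    rw [Set.uIcc_of_le ht.1]
    exact Set.Icc_subset_Icc le_rfl ht.2
  have II : ∀ (w : ℝ → ℝ),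
      IntegrableOn w (Set.Icc 0 T) volume → ∀ t ∈ Set.Icc (0:ℝ) T,
      IntervalIntegrable w volume 0 t := by
    intro w hw t ht
    refine (hw.mono_set ?_).intervalIntegrable
    rw [Set.uIcc_of_le ht.1]
    exact Set.Icc_subset_Icc le_rfl ht.2
  -- Step 1 : the basic integral inequality
  have step1 : ∀ t ∈ Set.Icc (0:ℝ) T,
      f t ≤ (1 / σ) * (∫ s in (0:ℝ)..t, h s) + (1 / σ) * ∫ s in (0:ℝ)..t, f s := by
    intro t ht
    have i₁ := IIX _ hΦu₁ t ht
    have i₂ := IIX _ hΦu₂ t ht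
    have ih := II _ hh_int t ht
    have iff' := II _ f_int t ht
    have hzz : z₁ t - z₂ t =
        ∫ s in (0:ℝ)..t, (Φ (g₁ s + A (z₁ s)) - Φ (g₂ s + A (z₂ s))) := by
      rw [hz₁ t ht, hz₂ t ht, intervalIntegral.integral_sub i₁ i₂]
    calc f t = ‖∫ s in (0:ℝ)..t, (Φ (g₁ s + A (z₁ s)) - Φ (g₂ s + A (z₂ s)))‖ := by
            show ‖z₁ t - z₂ t‖ = _
            rw [hzz]
      _ ≤ ∫ s in (0:ℝ)..t, ‖Φ (g₁ s + A (z₁ s)) - Φ (g₂ s + A (z₂ s))‖ :=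
            intervalIntegral.norm_integral_le_integral_norm ht.1
      _ ≤ ∫ s in (0:ℝ)..t, (1 / σ) * (h s + f s) := by
            refine intervalIntegral.integral_mono_on ht.1 (i₁.sub i₂).norm
              (((ih.add iff').const_mul (1 / σ))) fun s _ => lipf s
      _ = (1 / σ) * (∫ s in (0:ℝ)..t, h s) + (1 / σ) * ∫ s in (0:ℝ)..t, f s := by
            rw [intervalIntegral.integral_const_mul, intervalIntegral.integral_add ih iff',
              mul_add]
  -- primitives
  set F : ℝ → ℝ := fun t => ∫ s in (0:ℝ)..t, f s with hF_def
  set H : ℝ → ℝ := fun t => ∫ s in (0:ℝ)..t, h s with hH_def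
  have hH_nonneg : ∀ t ∈ Set.Icc (0:ℝ) T, 0 ≤ H t := fun t ht =>
    intervalIntegral.integral_nonneg ht.1 fun s _ => norm_nonneg _
  have hF_nonneg : ∀ t ∈ Set.Icc (0:ℝ) T, 0 ≤ F t := fun t ht =>
    intervalIntegral.integral_nonneg ht.1 fun s _ => norm_nonneg _
  have hH_mono : ∀ s t : ℝ, t ∈ Set.Icc (0:ℝ) T → 0 ≤ s → s ≤ t → H s ≤ H t := by
    intro s t ht hs0 hst
    refine intervalIntegral.integral_mono_interval le_rfl hs0 hst
      (Filter.Eventually.of_forall fun x => norm_nonneg _) (II _ hh_int t ht)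
  have F_cont : ContinuousOn F (Set.Icc 0 T) := by
    have := intervalIntegral.continuousOn_primitive_interval
      (a := (0:ℝ)) (b := T) (μ := volume) (f := f) (by rwa [Set.uIcc_of_le hT.le])
    rwa [Set.uIcc_of_le hT.le] at this
  -- Gronwall : main estimate
  have main : ∀ t ∈ Set.Icc (0:ℝ) T, f t ≤ (1 / σ) * Real.exp (t / σ) * H t := by
    intro t₀ ht₀
    have hsub : Set.Icc (0:ℝ) t₀ ⊆ Set.Icc 0 T := Set.Icc_subset_Icc le_rfl ht₀.2
    have Fderiv : ∀ x ∈ Set.Ico (0:ℝ) t₀, HasDerivWithinAt F (f x) (Set.Ici x) x := by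
      intro x hx
      have hxT : x < T := lt_of_lt_of_le hx.2 ht₀.2
      have hxmem : x ∈ Set.Icc (0:ℝ) T := ⟨hx.1, hxT.le⟩
      have hmeas : StronglyMeasurableAtFilter f (nhdsWithin x (Set.Ioi x)) volume :=
        ⟨Set.Icc x T, Icc_mem_nhdsGT_of_mem ⟨le_rfl, hxT⟩,
          ((f_cont.mono (Set.Icc_subset_Icc hx.1 le_rfl)).aestronglyMeasurable
            measurableSet_Icc)⟩
      have hcw : ContinuousWithinAt f (Set.Ioi x) x := by
        refine (f_cont x hxmem).mono_of_mem_nhdsWithin ?_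
        exact Filter.mem_of_superset (Icc_mem_nhdsGT_of_mem ⟨le_rfl, hxT⟩)
          (Set.Icc_subset_Icc hx.1 le_rfl)
      exact intervalIntegral.integral_hasDerivWithinAt_right (II _ f_int x hxmem)
        (t := Set.Ioi x) hmeas hcw
    have bound : ∀ x ∈ Set.Ico (0:ℝ) t₀,
        ‖f x‖ ≤ (1 / σ) * ‖F x‖ + (1 / σ) * H t₀ := by
      intro x hx
      have hxmem : x ∈ Set.Icc (0:ℝ) T := ⟨hx.1, (hx.2.le.trans ht₀.2)⟩
      have h1 := step1 x hxmem
      have h2 : H x ≤ H t₀ := hH_mono x t₀ ht₀ hx.1 hx.2.le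
      have h3 : ‖F x‖ = F x := Real.norm_of_nonneg (hF_nonneg x hxmem)
      have h4 : ‖f x‖ = f x := Real.norm_of_nonneg (norm_nonneg _)
      rw [h3, h4]
      nlinarith
    have hgr := norm_le_gronwallBound_of_norm_deriv_right_le (f := F) (f' := f)
      (δ := 0) (K := 1 / σ) (ε := (1 / σ) * H t₀) (a := 0) (b := t₀)
      (F_cont.mono hsub) Fderiv (by simp [hF_def]) bound t₀ ⟨ht₀.1, le_rfl⟩
    rw [gronwallBound_of_K_ne_0 (ne_of_gt hσ')] at hgr
    simp only [sub_zero] at hgr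
    have hFt : F t₀ ≤ H t₀ * (Real.exp (t₀ / σ) - 1) := by
      have : ((1 / σ) * H t₀) / (1 / σ) = H t₀ := by field_simp
      have hF' : F t₀ ≤ ‖F t₀‖ := le_abs_self _
      calc F t₀ ≤ 0 * Real.exp (1 / σ * t₀) +
            (1 / σ) * H t₀ / (1 / σ) * (Real.exp (1 / σ * t₀) - 1) := hF'.trans hgr
        _ = H t₀ * (Real.exp (t₀ / σ) - 1) := by
            have e : (1 / σ) * t₀ = t₀ / σ := by ring
            rw [this, e, zero_mul, zero_add]
    have h1 := step1 t₀ ht₀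
    have hexp : (1:ℝ) ≤ Real.exp (t₀ / σ) := by
      rw [Real.one_le_exp_iff]; exact div_nonneg ht₀.1 hσ.le
    have hHn := hH_nonneg t₀ ht₀
    calc f t₀ ≤ (1 / σ) * H t₀ + (1 / σ) * F t₀ := h1
      _ ≤ (1 / σ) * H t₀ + (1 / σ) * (H t₀ * (Real.exp (t₀ / σ) - 1)) := by nlinarith
      _ = (1 / σ) * Real.exp (t₀ / σ) * H t₀ := by ring
  constructor
  · intro t ht
    exact main t ht
  · refine Filter.eventually_of_mem (self_mem_ae_restrict measurableSet_Icc) fun t ht => ?_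
    have h1 := lipf t
    have h2 := main t ht
    have : ‖Φ (g₁ t + A (z₁ t)) - Φ (g₂ t + A (z₂ t))‖ ≤
        (1 / σ) * h t + (1 / σ) * ((1 / σ) * Real.exp (t / σ) * H t) := by
      nlinarith
    calc ‖Φ (g₁ t + A (z₁ t)) - Φ (g₂ t + A (z₂ t))‖ ≤
        (1 / σ) * h t + (1 / σ) * ((1 / σ) * Real.exp (t / σ) * H t) := this
      _ = (1 / σ) * ‖g₁ t - g₂ t‖ +
          (1 / σ ^ 2) * Real.exp (t / σ) * ∫ s in (0:ℝ)..t, ‖g₁ s - g₂ s‖ := by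
          rw [hh_def, hH_def]; ring
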